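/- Let a, b, c, r be positive natural numbers. Let T̂ and E be real matrices with rows indexed by [a] and columns indexed by pairs in [b]×[c], and set T := T̂ + E. Suppose that (i) the matrix obtained by reindexing T with rows indexed by [a]×[c] and columns indexed by [b] (entry at ((i,k), j) equal to T(i,(j,k))) has rank at most r, and (ii) the matrix obtained by reindexing T with rows indexed by [a]×[b] and columns indexed by [c] (entry at ((i,j), k) equal to T(i,(j,k))) has rank at most r. Then there exist a real b×b matrix P₁ and a real c×c matrix P₂, each symmetric, idempotent, and of rank at most r, such that ‖T̂·(P₁ ⊗ P₂) − T̂‖_F² ≤ 2‖E‖_F². -/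

import Mathlib

open Matrix
open scoped Kronecker

/-- The Frobenius norm of a real matrix. -/
noncomputable def frobNorm {m n : Type*} [Fintype m] [Fintype n] (M : Matrix m n ℝ) : ℝ :=
  Real.sqrt (∑ i, ∑ j, M i j ^ 2)

lemma exists_proj (n r : ℕ) (V : Submodule ℝ (EuclideanSpace ℝ (Fin n)))
    (hV : Module.finrank ℝ V ≤ r) :
    ∃ P : Matrix (Fin n) (Fin n) ℝ, Pᵀ = P ∧ P * P = P ∧ P.rank ≤ r ∧
      ∀ w ∈ V, ∀ j, (∑ i, w i * P i j) = w j := by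
  classical
  set d := Module.finrank ℝ V with hd
  have bas : OrthonormalBasis (Fin d) ℝ V := stdOrthonormalBasis ℝ V
  set A : Matrix (Fin d) (Fin n) ℝ := fun s j => (bas s : EuclideanSpace ℝ (Fin n)) j with hA
  have hAAt : A * Aᵀ = 1 := by
    ext s t
    have := (orthonormal_iff_ite.mp bas.orthonormal) s t
    rw [Submodule.coe_inner, PiLp.inner_apply] at this
    simp only [Matrix.mul_apply, Matrix.transpose_apply, Matrix.one_apply, hA]
    change ∑ x, A s x * A t x = _
    simp only [RCLike.inner_apply, conj_trivial] at this
    rw [← this]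
    exact Finset.sum_congr rfl fun x _ => mul_comm _ _
  refine ⟨Aᵀ * A, ?_, ?_, ?_, ?_⟩
  · rw [Matrix.transpose_mul, Matrix.transpose_transpose]
  · rw [Matrix.mul_assoc, ← Matrix.mul_assoc A, hAAt, Matrix.one_mul]
  · calc (Aᵀ * A).rank ≤ Aᵀ.rank := Matrix.rank_mul_le_left _ _
      _ ≤ d := by simpa using Aᵀ.rank_le_card_width
      _ ≤ r := hV
  · intro w hw j
    have hx := bas.sum_repr ⟨w, hw⟩
    have hx' : ∀ j, ∑ s, bas.repr ⟨w, hw⟩ s * (bas s : EuclideanSpace ℝ (Fin n)) j = w j := by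
      intro j
      have h0 : ((∑ s, bas.repr ⟨w, hw⟩ s • bas s : V) : EuclideanSpace ℝ (Fin n)) = w :=
        congrArg _ hx
      rw [Submodule.coe_sum] at h0
      have h1 := congrArg (fun v : EuclideanSpace ℝ (Fin n) => v j) h0
      have h2 : (∑ s : Fin d, bas.repr ⟨w, hw⟩ s •
          (fun i => (bas s : EuclideanSpace ℝ (Fin n)) i : Fin n → ℝ)) j = w j := by
        simpa using h1
      simpa [Finset.sum_apply, Pi.smul_apply, smul_eq_mul] using h2
    have hrepr : ∀ s, bas.repr ⟨w, hw⟩ s = ∑ i, (bas s : EuclideanSpace ℝ (Fin n)) i * w i := by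
      intro s
      rw [bas.repr_apply_apply, Submodule.coe_inner, PiLp.inner_apply]
      simp [RCLike.inner_apply, conj_trivial]
      exact Finset.sum_congr rfl fun x _ => mul_comm _ _
    calc ∑ i, w i * (Aᵀ * A) i j = ∑ i, ∑ s, w i * (A s i * A s j) := by
          simp [Matrix.mul_apply, Finset.mul_sum]
      _ = ∑ s, (∑ i, A s i * w i) * A s j := by
          rw [Finset.sum_comm]; congr 1; ext s; rw [Finset.sum_mul]; congr 1; ext i; ring
      _ = w j := by
          rw [← hx' j]; congr 1; ext s; rw [← hrepr s]

lemma trace_self_mul_transpose {m n : Type*} [Fintype m] [Fintype n] (A : Matrix m n ℝ) :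
    Matrix.trace (A * Aᵀ) = ∑ i, ∑ j, A i j ^ 2 := by
  simp [Matrix.trace, Matrix.diag, Matrix.mul_apply, sq]

lemma frob_sq_bound {m n : Type*} [Fintype m] [Fintype n] (Q : Matrix n n ℝ)
    (hQt : Qᵀ = Q) (hQ : Q * Q = Q) (E : Matrix m n ℝ) :
    ∑ i, ∑ j, (E * Q - E) i j ^ 2 ≤ ∑ i, ∑ j, E i j ^ 2 := by
  have key : (E * Q - E) * (E * Q - E)ᵀ = E * Eᵀ - (E * Q) * (E * Q)ᵀ := by
    simp only [Matrix.transpose_sub, Matrix.transpose_mul, hQt, Matrix.sub_mul, Matrix.mul_sub]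
    have h1 : E * Q * (Q * Eᵀ) = E * Q * Eᵀ := by
      rw [← Matrix.mul_assoc, Matrix.mul_assoc E Q Q, hQ]
    rw [h1, ← Matrix.mul_assoc]
    abel
  have h2 := congrArg Matrix.trace key
  rw [trace_self_mul_transpose, Matrix.trace_sub, trace_self_mul_transpose,
    trace_self_mul_transpose] at h2
  rw [h2]
  have : (0:ℝ) ≤ ∑ i, ∑ j, (E * Q) i j ^ 2 :=
    Finset.sum_nonneg fun i _ => Finset.sum_nonneg fun j _ => sq_nonneg _
  linarith

/-- the paper's Lemma A.5: let `T = T̂ + E` be a noisy 3-tensor (rows in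
`[a]`, columns in `[b] × [c]`) whose two reindexed matricizations (rows `[a] × [c]`,
columns `[b]`; and rows `[a] × [b]`, columns `[c]`) both have rank at most `r`. Then
there are orthogonal projections `P₁` (of size `b × b`) and `P₂` (of size `c × c`), each
symmetric, idempotent and of rank at most `r`, with
`‖T̂ (P₁ ⊗ P₂) − T̂‖_F² ≤ 2 ‖E‖_F²`. -/
theorem sequential_projection_recovery (a b c r : ℕ)
    (ha : 0 < a) (hb : 0 < b) (hc : 0 < c) (hr : 0 < r)
    (That E : Matrix (Fin a) (Fin b × Fin c) ℝ)
    (h1 : (Matrix.of fun (ik : Fin a × Fin c) (j : Fin b) =>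
      (That + E) ik.1 (j, ik.2)).rank ≤ r)
    (h2 : (Matrix.of fun (ij : Fin a × Fin b) (k : Fin c) =>
      (That + E) ij.1 (ij.2, k)).rank ≤ r) :
    ∃ (P1 : Matrix (Fin b) (Fin b) ℝ) (P2 : Matrix (Fin c) (Fin c) ℝ),
      P1ᵀ = P1 ∧ P1 * P1 = P1 ∧ P1.rank ≤ r ∧
      P2ᵀ = P2 ∧ P2 * P2 = P2 ∧ P2.rank ≤ r ∧
      frobNorm (That * (P1 ⊗ₖ P2) - That) ^ 2 ≤ 2 * frobNorm E ^ 2 := by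
  classical
  set T : Matrix (Fin a) (Fin b × Fin c) ℝ := That + E with hT
  set M1 : Matrix (Fin a × Fin c) (Fin b) ℝ :=
    Matrix.of fun (ik : Fin a × Fin c) (j : Fin b) => T ik.1 (j, ik.2) with hM1
  set M2 : Matrix (Fin a × Fin b) (Fin c) ℝ :=
    Matrix.of fun (ij : Fin a × Fin b) (k : Fin c) => T ij.1 (ij.2, k) with hM2
  set V1 : Submodule ℝ (EuclideanSpace ℝ (Fin b)) :=
    Submodule.map ((WithLp.linearEquiv 2 ℝ (Fin b → ℝ)).symm : (Fin b → ℝ) →ₗ[ℝ] EuclideanSpace ℝ (Fin b))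
      (Submodule.span ℝ (Set.range M1 : Set (Fin b → ℝ)))
    with hV1def
  set V2 : Submodule ℝ (EuclideanSpace ℝ (Fin c)) :=
    Submodule.map ((WithLp.linearEquiv 2 ℝ (Fin c → ℝ)).symm : (Fin c → ℝ) →ₗ[ℝ] EuclideanSpace ℝ (Fin c))
      (Submodule.span ℝ (Set.range M2 : Set (Fin c → ℝ)))
    with hV2def
  have hV1 : Module.finrank ℝ V1 ≤ r :=
    (LinearEquiv.finrank_map_eq _ _).trans_le ((M1.rank_eq_finrank_span_row).symm.trans_le h1)
  have hV2 : Module.finrank ℝ V2 ≤ r :=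
    (LinearEquiv.finrank_map_eq _ _).trans_le ((M2.rank_eq_finrank_span_row).symm.trans_le h2)
  obtain ⟨P1, hP1t, hP1i, hP1r, key1⟩ := exists_proj b r V1 hV1
  obtain ⟨P2, hP2t, hP2i, hP2r, key2⟩ := exists_proj c r V2 hV2
  set Q : Matrix (Fin b × Fin c) (Fin b × Fin c) ℝ := P1 ⊗ₖ P2 with hQdef
  have hQt : Qᵀ = Q := by
    rw [hQdef, ← Matrix.kroneckerMap_transpose, hP1t, hP2t]
  have hQi : Q * Q = Q := by
    rw [hQdef, ← Matrix.mul_kronecker_mul, hP1i, hP2i]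
  have hrow1 : ∀ (i : Fin a) (k : Fin c) (j : Fin b),
      (∑ j', T i (j', k) * P1 j' j) = T i (j, k) := by
    intro i k j
    have hmem : WithLp.toLp 2 (fun j' => T i (j', k) : Fin b → ℝ) ∈ V1 :=
      Submodule.mem_map_of_mem (Submodule.subset_span ⟨(i, k), rfl⟩)
    exact key1 _ hmem j
  have hrow2 : ∀ (i : Fin a) (j : Fin b) (k : Fin c),
      (∑ k', T i (j, k') * P2 k' k) = T i (j, k) := by
    intro i j k
    have hmem : WithLp.toLp 2 (fun k' => T i (j, k') : Fin c → ℝ) ∈ V2 :=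
      Submodule.mem_map_of_mem (Submodule.subset_span ⟨(i, j), rfl⟩)
    exact key2 _ hmem k
  have hTQ : T * Q = T := by
    ext i x
    obtain ⟨j, k⟩ := x
    rw [Matrix.mul_apply, Fintype.sum_prod_type_right]
    calc ∑ k' : Fin c, ∑ j' : Fin b, T i (j', k') * Q (j', k') (j, k)
        = ∑ k' : Fin c, (∑ j' : Fin b, T i (j', k') * P1 j' j) * P2 k' k := by
          congr 1; ext k'; rw [Finset.sum_mul]; congr 1; ext j'
          simp [hQdef, Matrix.kroneckerMap_apply]; ring
      _ = ∑ k' : Fin c, T i (j, k') * P2 k' k := by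
          congr 1; ext k'; rw [hrow1 i k' j]
      _ = T i (j, k) := hrow2 i j k
  have hdiff : That * Q - That = -(E * Q - E) := by
    have h0 : That * Q + E * Q - (That + E) = 0 := by
      rw [← Matrix.add_mul, ← hT, hTQ, sub_self]
    have h3 : That * Q - That - -(E * Q - E) = That * Q + E * Q - (That + E) := by abel
    rw [h0] at h3
    exact sub_eq_zero.mp h3
  refine ⟨P1, P2, hP1t, hP1i, hP1r, hP2t, hP2i, hP2r, ?_⟩
  have hnn : ∀ {m n : Type} [Fintype m] [Fintype n] (M : Matrix m n ℝ),
      (0:ℝ) ≤ ∑ i, ∑ j, M i j ^ 2 := fun M =>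
    Finset.sum_nonneg fun i _ => Finset.sum_nonneg fun j _ => sq_nonneg _
  have hsq : ∀ {m n : Type} [Fintype m] [Fintype n] (M : Matrix m n ℝ),
      frobNorm M ^ 2 = ∑ i, ∑ j, M i j ^ 2 := fun M => Real.sq_sqrt (hnn M)
  rw [hsq, hsq]
  have heq : ∑ i, ∑ x, (That * Q - That) i x ^ 2 = ∑ i, ∑ x, (E * Q - E) i x ^ 2 := by
    rw [hdiff]; simp only [Matrix.neg_apply, neg_sq]
  rw [heq]
  have hb1 := frob_sq_bound Q hQt hQi E
  have hb2 := hnn E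
  linarith
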